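/- arXiv:1506.00337 — 8 statements merged into one kernel-verified Lean document; each statement's English description precedes it below -/
import Mathlib

section
/- In any finite relation algebra whose elements are unions of atoms, if a subalgebra S (containing all atoms, closed under composition, converse, and nonempty intersection) satisfies the Helly property for triples, then composition distributes over nonempty intersection in S: for all R,T,U ∈ S with T∩U ≠ ∅, R∘(T∩U) = (R∘T)∩(R∘U) and (T∩U)∘R = (T∘R)∩(U∘R). -/
/-- In a finite, atomistic relation algebra, if a subalgebra `S`
satisfies the Helly property for triples, then composition distributes over
nonempty intersections of elements of `S` (on both sides). -/
theorem helly_subalgebra_is_distributive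
    {α : Type*} [BooleanAlgebra α] [Fintype α]
    (atomistic : ∀ a : α, ∃ s : Finset α, (∀ b ∈ s, IsAtom b) ∧ a = s.sup id)
    (comp : α → α → α) (conv : α → α) (ident : α)
    (assoc : ∀ a b c : α, comp (comp a b) c = comp a (comp b c))
    (comp_ident : ∀ a : α, comp a ident = a)
    (cycle1 : ∀ R S T : α, comp R S ⊓ T ≠ ⊥ ↔ comp (conv R) T ⊓ S ≠ ⊥)
    (cycle2 : ∀ R S T : α, comp R S ⊓ T ≠ ⊥ ↔ comp T (conv S) ⊓ R ≠ ⊥)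
    (S : Set α)
    (hatoms : ∀ a : α, IsAtom a → a ∈ S)
    (hconv : ∀ a ∈ S, conv a ∈ S)
    (hcomp : ∀ a ∈ S, ∀ b ∈ S, comp a b ∈ S)
    (hinter : ∀ a ∈ S, ∀ b ∈ S, a ⊓ b ≠ ⊥ → a ⊓ b ∈ S)
    (hhelly : ∀ R ∈ S, ∀ T ∈ S, ∀ U ∈ S,
      (R ⊓ T ⊓ U ≠ ⊥ ↔ R ⊓ T ≠ ⊥ ∧ R ⊓ U ≠ ⊥ ∧ T ⊓ U ≠ ⊥)) :
    ∀ R ∈ S, ∀ T ∈ S, ∀ U ∈ S, T ⊓ U ≠ ⊥ →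
      comp R (T ⊓ U) = comp R T ⊓ comp R U ∧
      comp (T ⊓ U) R = comp T R ⊓ comp U R := by
  have le_of_atoms : ∀ a b : α, (∀ γ : α, IsAtom γ → γ ≤ a → γ ≤ b) → a ≤ b := by
    intro a b h
    obtain ⟨s, hs, rfl⟩ := atomistic a
    exact Finset.sup_le fun γ hγ => h γ (hs γ hγ) (Finset.le_sup (f := id) hγ)
  have atom_le : ∀ (γ x : α), IsAtom γ → (γ ⊓ x ≠ ⊥ ↔ γ ≤ x) := by
    intro γ x hγ
    constructor
    · intro h
      rcases lt_or_eq_of_le (inf_le_left : γ ⊓ x ≤ γ) with hlt | heq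
      · exact absurd (hγ.2 _ hlt) h
      · exact heq ▸ inf_le_right
    · intro h
      rw [inf_eq_left.2 h]; exact hγ.1
  intro R hR T hT U hU hTU
  have key1 : ∀ γ : α, IsAtom γ → ∀ X : α,
      (γ ≤ comp R X ↔ comp (conv R) γ ⊓ X ≠ ⊥) := by
    intro γ hγ X
    rw [← atom_le γ _ hγ, inf_comm, cycle1]
  have key2 : ∀ γ : α, IsAtom γ → ∀ X : α,
      (γ ≤ comp X R ↔ comp γ (conv R) ⊓ X ≠ ⊥) := by
    intro γ hγ X
    rw [← atom_le γ _ hγ, inf_comm, cycle2]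
  constructor
  · apply le_antisymm
    · apply le_of_atoms
      intro γ hγ hle
      have h := (key1 γ hγ (T ⊓ U)).1 hle
      rw [← inf_assoc] at h
      have hh := (hhelly _ (hcomp _ (hconv R hR) _ (hatoms γ hγ)) T hT U hU).1 h
      exact le_inf ((key1 γ hγ T).2 hh.1) ((key1 γ hγ U).2 hh.2.1)
    · apply le_of_atoms
      intro γ hγ hle
      have h1 := (key1 γ hγ T).1 (le_trans hle inf_le_left)
      have h2 := (key1 γ hγ U).1 (le_trans hle inf_le_right)
      have hh := (hhelly _ (hcomp _ (hconv R hR) _ (hatoms γ hγ)) T hT U hU).2 ⟨h1, h2, hTU⟩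
      rw [inf_assoc] at hh
      exact (key1 γ hγ (T ⊓ U)).2 hh
  · apply le_antisymm
    · apply le_of_atoms
      intro γ hγ hle
      have h := (key2 γ hγ (T ⊓ U)).1 hle
      rw [← inf_assoc] at h
      have hh := (hhelly _ (hcomp _ (hatoms γ hγ) _ (hconv R hR)) T hT U hU).1 h
      exact le_inf ((key2 γ hγ T).2 hh.1) ((key2 γ hγ U).2 hh.2.1)
    · apply le_of_atoms
      intro γ hγ hle
      have h1 := (key2 γ hγ T).1 (le_trans hle inf_le_left)
      have h2 := (key2 γ hγ U).1 (le_trans hle inf_le_right)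
      have hh := (hhelly _ (hcomp _ (hatoms γ hγ) _ (hconv R hR)) T hT U hU).2 ⟨h1, h2, hTU⟩
      rw [inf_assoc] at hh
      exact (key2 γ hγ (T ⊓ U)).2 hh
end

section
/- In the Point Algebra (the Boolean algebra of relations generated by <, =, > on the real numbers, with relational composition), the subclass {∅, <, >, =, ≤, ≥, full} is closed under composition, converse, and intersection, and composition distributes over nonempty intersections of its elements. -/
/-- Relational composition of binary relations on `ℝ`. -/
def PA.comp (R S : Set (ℝ × ℝ)) : Set (ℝ × ℝ) :=
  {p | ∃ z : ℝ, (p.1, z) ∈ R ∧ (z, p.2) ∈ S}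

/-- Relational converse. -/
def PA.conv (R : Set (ℝ × ℝ)) : Set (ℝ × ℝ) := {p | (p.2, p.1) ∈ R}

def PA.lt : Set (ℝ × ℝ) := {p | p.1 < p.2}
def PA.gt : Set (ℝ × ℝ) := {p | p.2 < p.1}
def PA.eq : Set (ℝ × ℝ) := {p | p.1 = p.2}
def PA.le : Set (ℝ × ℝ) := {p | p.1 ≤ p.2}
def PA.ge : Set (ℝ × ℝ) := {p | p.2 ≤ p.1}

/-- The convex subclass {∅, <, >, =, ≤, ≥, full} of the Point Algebra. -/
def PA.convexClass : Set (Set (ℝ × ℝ)) :=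
  {∅, PA.lt, PA.gt, PA.eq, PA.le, PA.ge, Set.univ}

namespace PAaux

def interp (a b c : Bool) : Set (ℝ × ℝ) :=
  {p | (a = true ∧ p.1 < p.2) ∨ (b = true ∧ p.1 = p.2) ∨ (c = true ∧ p.2 < p.1)}

lemma mem_interp {a b c : Bool} {p : ℝ × ℝ} :
    p ∈ interp a b c ↔ (a = true ∧ p.1 < p.2) ∨ (b = true ∧ p.1 = p.2) ∨ (c = true ∧ p.2 < p.1) :=
  Iff.rfl

lemma interp_inter (a b c a' b' c' : Bool) :
    interp a b c ∩ interp a' b' c' = interp (a && a') (b && b') (c && c') := by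
  ext ⟨x, y⟩
  rcases lt_trichotomy x y with h | h | h <;>
    simp [interp, h, ne_of_lt, ne_of_gt, lt_asymm] <;>
    cases a <;> cases a' <;> cases b <;> cases b' <;> cases c <;> cases c' <;> simp_all

lemma interp_union (a b c a' b' c' : Bool) :
    interp a b c ∪ interp a' b' c' = interp (a || a') (b || b') (c || c') := by
  ext ⟨x, y⟩
  rcases lt_trichotomy x y with h | h | h <;>
    simp [interp, h, ne_of_lt, ne_of_gt, lt_asymm] <;> tauto

lemma interp_conv (a b c : Bool) : PA.conv (interp a b c) = interp c b a := by
  ext ⟨x, y⟩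
  simp [PA.conv, interp, eq_comm]
  tauto

lemma interp_fff : interp false false false = ∅ := by
  ext ⟨x, y⟩; simp [interp]

lemma interp_ttt : interp true true true = Set.univ := by
  ext ⟨x, y⟩
  simp [interp]
  rcases lt_trichotomy x y with h | h | h <;> tauto

lemma interp_lt : interp true false false = PA.lt := by ext ⟨x, y⟩; simp [interp, PA.lt]
lemma interp_gt : interp false false true = PA.gt := by ext ⟨x, y⟩; simp [interp, PA.gt]
lemma interp_eq : interp false true false = PA.eq := by ext ⟨x, y⟩; simp [interp, PA.eq]
lemma interp_le : interp true true false = PA.le := by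
  ext ⟨x, y⟩; simp [interp, PA.le, le_iff_lt_or_eq]
lemma interp_ge : interp false true true = PA.ge := by
  ext ⟨x, y⟩; simp [interp, PA.ge, le_iff_lt_or_eq, eq_comm]
  tauto

lemma comp_empty (R : Set (ℝ × ℝ)) : PA.comp R ∅ = ∅ := by
  ext p; simp [PA.comp]

lemma empty_comp (R : Set (ℝ × ℝ)) : PA.comp ∅ R = ∅ := by
  ext p; simp [PA.comp]

lemma comp_union_left (R S T : Set (ℝ × ℝ)) :
    PA.comp (R ∪ S) T = PA.comp R T ∪ PA.comp S T := by
  ext p; simp only [PA.comp, Set.mem_union, Set.mem_setOf_eq, or_and_right, exists_or]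

lemma comp_union_right (R S T : Set (ℝ × ℝ)) :
    PA.comp R (S ∪ T) = PA.comp R S ∪ PA.comp R T := by
  ext p; simp only [PA.comp, Set.mem_union, Set.mem_setOf_eq, and_or_left, exists_or]

lemma comp_lt_lt : PA.comp PA.lt PA.lt = PA.lt := by
  ext ⟨x, y⟩
  simp only [PA.comp, PA.lt, Set.mem_setOf_eq]
  constructor
  · rintro ⟨z, h1, h2⟩; exact lt_trans h1 h2
  · intro h; obtain ⟨z, h1, h2⟩ := exists_between h; exact ⟨z, h1, h2⟩

lemma comp_gt_gt : PA.comp PA.gt PA.gt = PA.gt := by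
  ext ⟨x, y⟩
  simp only [PA.comp, PA.gt, Set.mem_setOf_eq]
  constructor
  · rintro ⟨z, h1, h2⟩; exact lt_trans h2 h1
  · intro h; obtain ⟨z, h1, h2⟩ := exists_between h; exact ⟨z, h2, h1⟩

lemma comp_lt_gt : PA.comp PA.lt PA.gt = Set.univ := by
  ext ⟨x, y⟩
  simp only [PA.comp, PA.lt, PA.gt, Set.mem_setOf_eq, Set.mem_univ, iff_true]
  exact ⟨max x y + 1, by simp [lt_of_le_of_lt (le_max_left x y)],
    by simp [lt_of_le_of_lt (le_max_right x y)]⟩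

lemma comp_gt_lt : PA.comp PA.gt PA.lt = Set.univ := by
  ext ⟨x, y⟩
  simp only [PA.comp, PA.lt, PA.gt, Set.mem_setOf_eq, Set.mem_univ, iff_true]
  exact ⟨min x y - 1, by simp [lt_of_lt_of_le (by linarith [min_le_left x y] : min x y - 1 < min x y) (min_le_left x y)],
    by linarith [min_le_right x y]⟩

lemma comp_eq_left (R : Set (ℝ × ℝ)) : PA.comp PA.eq R = R := by
  ext ⟨x, y⟩
  simp only [PA.comp, PA.eq, Set.mem_setOf_eq]
  constructor
  · rintro ⟨z, rfl, h⟩; exact h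
  · intro h; exact ⟨x, rfl, h⟩

lemma comp_eq_right (R : Set (ℝ × ℝ)) : PA.comp R PA.eq = R := by
  ext ⟨x, y⟩
  simp only [PA.comp, PA.eq, Set.mem_setOf_eq]
  constructor
  · rintro ⟨z, h, rfl⟩; exact h
  · intro h; exact ⟨y, h, rfl⟩

lemma interp_decomp (a b c : Bool) :
    interp a b c = interp a false false ∪ (interp false b false ∪ interp false false c) := by
  rw [interp_union, interp_union]; simp

lemma cu1 : PA.comp (interp true false false) (interp true false false) = interp true false false := by
  rw [interp_lt]; exact comp_lt_lt
lemma cu2 : PA.comp (interp true false false) (interp false true false) = interp true false false := by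
  rw [interp_lt, interp_eq]; exact comp_eq_right _
lemma cu3 : PA.comp (interp true false false) (interp false false true) = interp true true true := by
  rw [interp_lt, interp_gt, interp_ttt]; exact comp_lt_gt
lemma cu4 : PA.comp (interp false true false) (interp true false false) = interp true false false := by
  rw [interp_lt, interp_eq]; exact comp_eq_left _
lemma cu5 : PA.comp (interp false true false) (interp false true false) = interp false true false := by
  rw [interp_eq]; exact comp_eq_left _
lemma cu6 : PA.comp (interp false true false) (interp false false true) = interp false false true := by
  rw [interp_eq, interp_gt]; exact comp_eq_left _
lemma cu7 : PA.comp (interp false false true) (interp true false false) = interp true true true := by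
  rw [interp_lt, interp_gt, interp_ttt]; exact comp_gt_lt
lemma cu8 : PA.comp (interp false false true) (interp false true false) = interp false false true := by
  rw [interp_eq, interp_gt]; exact comp_eq_right _
lemma cu9 : PA.comp (interp false false true) (interp false false true) = interp false false true := by
  rw [interp_gt]; exact comp_gt_gt

def compT (a b c a' b' c' : Bool) : Bool × Bool × Bool :=
  ((a && a') || (a && b') || (b && a') || (a && c') || (c && a'),
   (b && b') || (a && c') || (c && a'),
   (c && c') || (c && b') || (b && c') || (a && c') || (c && a'))

lemma interp_comp (a b c a' b' c' : Bool) :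
    PA.comp (interp a b c) (interp a' b' c') =
      interp (compT a b c a' b' c').1 (compT a b c a' b' c').2.1 (compT a b c a' b' c').2.2 := by
  rw [interp_decomp a b c, interp_decomp a' b' c']
  cases a <;> cases b <;> cases c <;> cases a' <;> cases b' <;> cases c' <;>
    · simp only [comp_union_left, comp_union_right, interp_fff, comp_empty, empty_comp,
        cu1, cu2, cu3, cu4, cu5, cu6, cu7, cu8, cu9, Set.union_empty, Set.empty_union,
        Set.union_univ, Set.univ_union]
      simp [compT, interp_union, interp_ttt, interp_fff]

lemma interp_nonempty {a b c : Bool} (h : (a, b, c) ≠ (false, false, false)) :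
    interp a b c ≠ ∅ := by
  cases a
  · cases b
    · cases c
      · exact absurd rfl h
      · exact Set.Nonempty.ne_empty ⟨((1:ℝ), (0:ℝ)), Or.inr (Or.inr ⟨rfl, by norm_num⟩)⟩
    · exact Set.Nonempty.ne_empty ⟨((0:ℝ), (0:ℝ)), Or.inr (Or.inl ⟨rfl, rfl⟩)⟩
  · exact Set.Nonempty.ne_empty ⟨((0:ℝ), (1:ℝ)), Or.inl ⟨rfl, by norm_num⟩⟩

lemma interp_eq_empty_iff (a b c : Bool) :
    interp a b c = ∅ ↔ (a, b, c) = (false, false, false) := by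
  constructor
  · intro h
    by_contra hne
    exact interp_nonempty hne h
  · intro h
    have h' : a = false ∧ b = false ∧ c = false := by simpa using h
    obtain ⟨rfl, rfl, rfl⟩ := h'
    exact interp_fff

lemma good_mem {a b c : Bool} (h : (a, b, c) ≠ (true, false, true)) :
    interp a b c ∈ PA.convexClass := by
  cases a <;> cases b <;> cases c <;>
    simp_all [PA.convexClass, interp_fff, interp_lt, interp_gt, interp_eq, interp_le,
      interp_ge, interp_ttt]

lemma mem_good {R : Set (ℝ × ℝ)} (h : R ∈ PA.convexClass) :
    ∃ a b c : Bool, (a, b, c) ≠ (true, false, true) ∧ R = interp a b c := by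
  simp only [PA.convexClass, Set.mem_insert_iff, Set.mem_singleton_iff] at h
  rcases h with rfl | rfl | rfl | rfl | rfl | rfl | rfl
  · exact ⟨false, false, false, by decide, interp_fff.symm⟩
  · exact ⟨true, false, false, by decide, interp_lt.symm⟩
  · exact ⟨false, false, true, by decide, interp_gt.symm⟩
  · exact ⟨false, true, false, by decide, interp_eq.symm⟩
  · exact ⟨true, true, false, by decide, interp_le.symm⟩
  · exact ⟨false, true, true, by decide, interp_ge.symm⟩
  · exact ⟨true, true, true, by decide, interp_ttt.symm⟩

lemma compT_good : ∀ a b c a' b' c' : Bool, (a, b, c) ≠ (true, false, true) →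
    (a', b', c') ≠ (true, false, true) →
    (compT a b c a' b' c') ≠ (true, false, true) := by decide

lemma and_good : ∀ a b c a' b' c' : Bool, (a, b, c) ≠ (true, false, true) →
    (a', b', c') ≠ (true, false, true) →
    ((a && a', b && b', c && c') : Bool × Bool × Bool) ≠ (true, false, true) := by decide

lemma conv_good : ∀ a b c : Bool, (a, b, c) ≠ (true, false, true) →
    ((c, b, a) : Bool × Bool × Bool) ≠ (true, false, true) := by decide

set_option maxHeartbeats 2000000 in
set_option synthInstance.maxHeartbeats 2000000 in
set_option synthInstance.maxSize 2000 in
lemma compT_distrib_right : ∀ a b c s1 s2 s3 t1 t2 t3 : Bool,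
    (a, b, c) ≠ (true, false, true) → (s1, s2, s3) ≠ (true, false, true) →
    (t1, t2, t3) ≠ (true, false, true) →
    (s1 && t1, s2 && t2, s3 && t3) ≠ ((false, false, false) : Bool × Bool × Bool) →
    compT a b c (s1 && t1) (s2 && t2) (s3 && t3) =
      ((compT a b c s1 s2 s3).1 && (compT a b c t1 t2 t3).1,
       (compT a b c s1 s2 s3).2.1 && (compT a b c t1 t2 t3).2.1,
       (compT a b c s1 s2 s3).2.2 && (compT a b c t1 t2 t3).2.2) := by decide

set_option maxHeartbeats 2000000 in
set_option synthInstance.maxHeartbeats 2000000 in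
set_option synthInstance.maxSize 2000 in
lemma compT_distrib_left : ∀ a b c s1 s2 s3 t1 t2 t3 : Bool,
    (a, b, c) ≠ (true, false, true) → (s1, s2, s3) ≠ (true, false, true) →
    (t1, t2, t3) ≠ (true, false, true) →
    (s1 && t1, s2 && t2, s3 && t3) ≠ ((false, false, false) : Bool × Bool × Bool) →
    compT (s1 && t1) (s2 && t2) (s3 && t3) a b c =
      ((compT s1 s2 s3 a b c).1 && (compT t1 t2 t3 a b c).1,
       (compT s1 s2 s3 a b c).2.1 && (compT t1 t2 t3 a b c).2.1,
       (compT s1 s2 s3 a b c).2.2 && (compT t1 t2 t3 a b c).2.2) := by decide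

end PAaux

/-- the subclass {∅, <, >, =, ≤, ≥, full} of the Point Algebra is
closed under composition, converse and intersection, and composition
distributes over nonempty intersections of its elements. -/
theorem PA_convexClass_closed_and_distributive :
    (∀ R ∈ PA.convexClass, ∀ S ∈ PA.convexClass, PA.comp R S ∈ PA.convexClass) ∧
    (∀ R ∈ PA.convexClass, PA.conv R ∈ PA.convexClass) ∧
    (∀ R ∈ PA.convexClass, ∀ S ∈ PA.convexClass, R ∩ S ∈ PA.convexClass) ∧
    (∀ R ∈ PA.convexClass, ∀ S ∈ PA.convexClass, ∀ T ∈ PA.convexClass,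
      S ∩ T ≠ ∅ →
        PA.comp R (S ∩ T) = PA.comp R S ∩ PA.comp R T ∧
        PA.comp (S ∩ T) R = PA.comp S R ∩ PA.comp T R) := by
  refine ⟨?_, ?_, ?_, ?_⟩
  · intro R hR S hS
    obtain ⟨a, b, c, hg, rfl⟩ := PAaux.mem_good hR
    obtain ⟨a', b', c', hg', rfl⟩ := PAaux.mem_good hS
    rw [PAaux.interp_comp]
    exact PAaux.good_mem (PAaux.compT_good _ _ _ _ _ _ hg hg')
  · intro R hR
    obtain ⟨a, b, c, hg, rfl⟩ := PAaux.mem_good hR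
    rw [PAaux.interp_conv]
    exact PAaux.good_mem (PAaux.conv_good _ _ _ hg)
  · intro R hR S hS
    obtain ⟨a, b, c, hg, rfl⟩ := PAaux.mem_good hR
    obtain ⟨a', b', c', hg', rfl⟩ := PAaux.mem_good hS
    rw [PAaux.interp_inter]
    exact PAaux.good_mem (PAaux.and_good _ _ _ _ _ _ hg hg')
  · intro R hR S hS T hT hne
    obtain ⟨a, b, c, hg, rfl⟩ := PAaux.mem_good hR
    obtain ⟨s1, s2, s3, hgs, rfl⟩ := PAaux.mem_good hS
    obtain ⟨t1, t2, t3, hgt, rfl⟩ := PAaux.mem_good hT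
    rw [PAaux.interp_inter] at hne ⊢
    have hne' : ((s1 && t1, s2 && t2, s3 && t3) : Bool × Bool × Bool) ≠ (false, false, false) :=
      fun h => hne ((PAaux.interp_eq_empty_iff _ _ _).2 h)
    constructor
    · have key := PAaux.compT_distrib_right a b c s1 s2 s3 t1 t2 t3 hg hgs hgt hne'
      simp only [PAaux.interp_comp, key, PAaux.interp_inter]
    · have key := PAaux.compT_distrib_left a b c s1 s2 s3 t1 t2 t3 hg hgs hgt hne'
      simp only [PAaux.interp_comp, key, PAaux.interp_inter]
end

section
/- In the Point Algebra, the subclass {∅, <, >, =, ≠, full} is closed under composition, converse, and intersection, and composition distributes over nonempty intersections of its elements. -/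
def PA.ne : Set (ℝ × ℝ) := {p | p.1 ≠ p.2}

/-- The subclass {∅, <, >, =, ≠, full} of the Point Algebra. -/
def PA.neClass : Set (Set (ℝ × ℝ)) :=
  {∅, PA.lt, PA.gt, PA.eq, PA.ne, Set.univ}

namespace PA

lemma mem0 : (∅ : Set (ℝ × ℝ)) ∈ PA.neClass := by simp [PA.neClass]
lemma mem1 : PA.lt ∈ PA.neClass := by simp [PA.neClass]
lemma mem2 : PA.gt ∈ PA.neClass := by simp [PA.neClass]
lemma mem3 : PA.eq ∈ PA.neClass := by simp [PA.neClass]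
lemma mem4 : PA.ne ∈ PA.neClass := by simp [PA.neClass]
lemma mem5 : (Set.univ : Set (ℝ × ℝ)) ∈ PA.neClass := by simp [PA.neClass]

lemma comp_empty_left (S : Set (ℝ × ℝ)) : PA.comp ∅ S = ∅ := by
  ext p; simp [PA.comp]
lemma comp_empty_right (S : Set (ℝ × ℝ)) : PA.comp S ∅ = ∅ := by
  ext p; simp [PA.comp]
lemma comp_eq_left (S : Set (ℝ × ℝ)) : PA.comp PA.eq S = S := by
  ext p; constructor
  · rintro ⟨z, hz, h⟩; simp [PA.eq] at hz; subst hz; exact h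
  · intro h; exact ⟨p.1, rfl, h⟩
lemma comp_eq_right (S : Set (ℝ × ℝ)) : PA.comp S PA.eq = S := by
  ext p; constructor
  · rintro ⟨z, h, hz⟩; simp [PA.eq] at hz; subst hz; exact h
  · intro h; exact ⟨p.2, h, rfl⟩

lemma comp_lt_lt : PA.comp PA.lt PA.lt = PA.lt := by
  ext ⟨x, y⟩; constructor
  · rintro ⟨z, h1, h2⟩
    have a1 : x < z := h1
    have a2 : z < y := h2
    exact lt_trans a1 a2
  · intro h
    have h' : x < y := h
    obtain ⟨z, h1, h2⟩ := exists_between h'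
    exact ⟨z, h1, h2⟩
lemma comp_gt_gt : PA.comp PA.gt PA.gt = PA.gt := by
  ext ⟨x, y⟩; constructor
  · rintro ⟨z, h1, h2⟩
    have a1 : z < x := h1
    have a2 : y < z := h2
    exact lt_trans a2 a1
  · intro h
    have h' : y < x := h
    obtain ⟨z, h1, h2⟩ := exists_between h'
    exact ⟨z, h2, h1⟩
lemma comp_lt_gt : PA.comp PA.lt PA.gt = Set.univ := by
  ext ⟨x, y⟩; simp only [Set.mem_univ, iff_true]
  exact ⟨max x y + 1, by simp [PA.lt]; nlinarith [le_max_left x y],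
    by simp [PA.gt]; nlinarith [le_max_right x y]⟩
lemma comp_gt_lt : PA.comp PA.gt PA.lt = Set.univ := by
  ext ⟨x, y⟩; simp only [Set.mem_univ, iff_true]
  exact ⟨min x y - 1, by simp [PA.gt]; nlinarith [min_le_left x y],
    by simp [PA.lt]; nlinarith [min_le_right x y]⟩
lemma comp_lt_ne : PA.comp PA.lt PA.ne = Set.univ := by
  ext ⟨x, y⟩; simp only [Set.mem_univ, iff_true]
  refine ⟨max x y + 1, ?_, ?_⟩
  · simp [PA.lt]; nlinarith [le_max_left x y]
  · simp [PA.ne]; nlinarith [le_max_right x y]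
lemma comp_ne_lt : PA.comp PA.ne PA.lt = Set.univ := by
  ext ⟨x, y⟩; simp only [Set.mem_univ, iff_true]
  refine ⟨min x y - 1, ?_, ?_⟩
  · simp [PA.ne]; nlinarith [min_le_left x y]
  · simp [PA.lt]; nlinarith [min_le_right x y]
lemma comp_gt_ne : PA.comp PA.gt PA.ne = Set.univ := by
  ext ⟨x, y⟩; simp only [Set.mem_univ, iff_true]
  refine ⟨min x y - 1, ?_, ?_⟩
  · simp [PA.gt]; nlinarith [min_le_left x y]
  · simp [PA.ne]; nlinarith [min_le_right x y]
lemma comp_ne_gt : PA.comp PA.ne PA.gt = Set.univ := by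
  ext ⟨x, y⟩; simp only [Set.mem_univ, iff_true]
  refine ⟨max x y + 1, ?_, ?_⟩
  · simp [PA.ne]; nlinarith [le_max_left x y]
  · simp [PA.gt]; nlinarith [le_max_right x y]
lemma comp_ne_ne : PA.comp PA.ne PA.ne = Set.univ := by
  ext ⟨x, y⟩; simp only [Set.mem_univ, iff_true]
  refine ⟨max x y + 1, ?_, ?_⟩
  · simp [PA.ne]; nlinarith [le_max_left x y]
  · simp [PA.ne]; nlinarith [le_max_right x y]
lemma comp_lt_univ : PA.comp PA.lt Set.univ = Set.univ := by
  ext ⟨x, y⟩; simp only [Set.mem_univ, iff_true]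
  exact ⟨x + 1, by simp only [Set.mem_setOf_eq, PA.lt]; linarith, trivial⟩
lemma comp_gt_univ : PA.comp PA.gt Set.univ = Set.univ := by
  ext ⟨x, y⟩; simp only [Set.mem_univ, iff_true]
  exact ⟨x - 1, by simp only [Set.mem_setOf_eq, PA.gt]; linarith, trivial⟩
lemma comp_ne_univ : PA.comp PA.ne Set.univ = Set.univ := by
  ext ⟨x, y⟩; simp only [Set.mem_univ, iff_true]
  exact ⟨x + 1, by simp only [Set.mem_setOf_eq, PA.ne]; linarith, trivial⟩
lemma comp_univ_lt : PA.comp Set.univ PA.lt = Set.univ := by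
  ext ⟨x, y⟩; simp only [Set.mem_univ, iff_true]
  exact ⟨y - 1, trivial, by simp only [Set.mem_setOf_eq, PA.lt]; linarith⟩
lemma comp_univ_gt : PA.comp Set.univ PA.gt = Set.univ := by
  ext ⟨x, y⟩; simp only [Set.mem_univ, iff_true]
  exact ⟨y + 1, trivial, by simp only [Set.mem_setOf_eq, PA.gt]; linarith⟩
lemma comp_univ_ne : PA.comp Set.univ PA.ne = Set.univ := by
  ext ⟨x, y⟩; simp only [Set.mem_univ, iff_true]
  exact ⟨y + 1, trivial, by simp only [Set.mem_setOf_eq, PA.ne]; linarith⟩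
lemma comp_univ_univ : PA.comp (Set.univ : Set (ℝ × ℝ)) Set.univ = Set.univ := by
  ext ⟨x, y⟩; simp only [Set.mem_univ, iff_true]
  exact ⟨0, trivial, trivial⟩

lemma conv_empty : PA.conv ∅ = ∅ := by ext p; simp [PA.conv]
lemma conv_lt : PA.conv PA.lt = PA.gt := by ext p; simp [PA.conv, PA.lt, PA.gt]
lemma conv_gt : PA.conv PA.gt = PA.lt := by ext p; simp [PA.conv, PA.lt, PA.gt]
lemma conv_eq : PA.conv PA.eq = PA.eq := by
  ext p; simp [PA.conv, PA.eq, eq_comm]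
lemma conv_ne : PA.conv PA.ne = PA.ne := by
  ext p; simp [PA.conv, PA.ne, ne_comm]
lemma conv_univ : PA.conv (Set.univ : Set (ℝ × ℝ)) = Set.univ := by
  ext p; simp [PA.conv]

lemma lt_inter_gt : PA.lt ∩ PA.gt = ∅ := by
  ext ⟨x, y⟩; simp [PA.lt, PA.gt]; intro h; linarith
lemma lt_inter_eq : PA.lt ∩ PA.eq = ∅ := by
  ext ⟨x, y⟩; simp [PA.lt, PA.eq]; intro h; linarith
lemma gt_inter_eq : PA.gt ∩ PA.eq = ∅ := by
  ext ⟨x, y⟩; simp [PA.gt, PA.eq]; intro h h2; subst h2; linarith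
lemma eq_inter_ne : PA.eq ∩ PA.ne = ∅ := by
  ext ⟨x, y⟩; simp only [PA.eq, PA.ne, Set.mem_inter_iff, Set.mem_setOf_eq, Set.mem_empty_iff_false, iff_false, not_and, not_not]; exact fun h => h
lemma lt_subset_ne : PA.lt ⊆ PA.ne := by
  rintro ⟨x, y⟩ h; exact ne_of_lt h
lemma gt_subset_ne : PA.gt ⊆ PA.ne := by
  rintro ⟨x, y⟩ h; exact (ne_of_lt h).symm

lemma mem_cases {R : Set (ℝ × ℝ)} (h : R ∈ PA.neClass) :
    R = ∅ ∨ R = PA.lt ∨ R = PA.gt ∨ R = PA.eq ∨ R = PA.ne ∨ R = Set.univ := by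
  simpa [PA.neClass] using h

/-- any two members with nonempty intersection are comparable -/
lemma comparable {S T : Set (ℝ × ℝ)} (hS : S ∈ PA.neClass) (hT : T ∈ PA.neClass) :
    S ∩ T = ∅ ∨ S ⊆ T ∨ T ⊆ S := by
  rcases mem_cases hS with rfl | rfl | rfl | rfl | rfl | rfl <;>
    rcases mem_cases hT with rfl | rfl | rfl | rfl | rfl | rfl <;>
      first
        | exact Or.inr (Or.inl (Set.empty_subset _))
        | exact Or.inr (Or.inr (Set.empty_subset _))
        | exact Or.inr (Or.inl (Set.subset_univ _))
        | exact Or.inr (Or.inr (Set.subset_univ _))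
        | exact Or.inr (Or.inl Set.Subset.rfl)
        | exact Or.inr (Or.inl lt_subset_ne)
        | exact Or.inr (Or.inr lt_subset_ne)
        | exact Or.inr (Or.inl gt_subset_ne)
        | exact Or.inr (Or.inr gt_subset_ne)
        | exact Or.inl lt_inter_gt
        | exact Or.inl lt_inter_eq
        | exact Or.inl gt_inter_eq
        | exact Or.inl eq_inter_ne
        | exact Or.inl (by rw [Set.inter_comm]; first
            | exact lt_inter_gt | exact lt_inter_eq | exact gt_inter_eq | exact eq_inter_ne)

lemma comp_mono_right {R S T : Set (ℝ × ℝ)} (h : S ⊆ T) : PA.comp R S ⊆ PA.comp R T := by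
  rintro p ⟨z, h1, h2⟩; exact ⟨z, h1, h h2⟩
lemma comp_mono_left {R S T : Set (ℝ × ℝ)} (h : S ⊆ T) : PA.comp S R ⊆ PA.comp T R := by
  rintro p ⟨z, h1, h2⟩; exact ⟨z, h h1, h2⟩

end PA

/-- the subclass {∅, <, >, =, ≠, full} of the Point Algebra is
closed under composition, converse and intersection, and composition
distributes over nonempty intersections of its elements. -/
theorem PA_neClass_closed_and_distributive :
    (∀ R ∈ PA.neClass, ∀ S ∈ PA.neClass, PA.comp R S ∈ PA.neClass) ∧
    (∀ R ∈ PA.neClass, PA.conv R ∈ PA.neClass) ∧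
    (∀ R ∈ PA.neClass, ∀ S ∈ PA.neClass, R ∩ S ∈ PA.neClass) ∧
    (∀ R ∈ PA.neClass, ∀ S ∈ PA.neClass, ∀ T ∈ PA.neClass,
      S ∩ T ≠ ∅ →
        PA.comp R (S ∩ T) = PA.comp R S ∩ PA.comp R T ∧
        PA.comp (S ∩ T) R = PA.comp S R ∩ PA.comp T R) := by
  refine ⟨?_, ?_, ?_, ?_⟩
  · intro R hR S hS
    rcases PA.mem_cases hR with rfl | rfl | rfl | rfl | rfl | rfl <;>
      rcases PA.mem_cases hS with rfl | rfl | rfl | rfl | rfl | rfl <;>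
        simp only [PA.comp_empty_left, PA.comp_empty_right, PA.comp_eq_left, PA.comp_eq_right,
          PA.comp_lt_lt, PA.comp_lt_gt, PA.comp_gt_lt, PA.comp_gt_gt, PA.comp_lt_ne,
          PA.comp_ne_lt, PA.comp_gt_ne, PA.comp_ne_gt, PA.comp_ne_ne, PA.comp_lt_univ,
          PA.comp_gt_univ, PA.comp_ne_univ, PA.comp_univ_lt, PA.comp_univ_gt, PA.comp_univ_ne,
          PA.comp_univ_univ] <;>
        first
          | exact PA.mem0 | exact PA.mem1 | exact PA.mem2
          | exact PA.mem3 | exact PA.mem4 | exact PA.mem5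
  · intro R hR
    rcases PA.mem_cases hR with rfl | rfl | rfl | rfl | rfl | rfl <;>
      simp only [PA.conv_empty, PA.conv_lt, PA.conv_gt, PA.conv_eq, PA.conv_ne, PA.conv_univ] <;>
      first
        | exact PA.mem0 | exact PA.mem1 | exact PA.mem2
        | exact PA.mem3 | exact PA.mem4 | exact PA.mem5
  · intro R hR S hS
    rcases PA.comparable hR hS with h | h | h
    · rw [h]; exact PA.mem0
    · rw [Set.inter_eq_left.mpr h]; exact hR
    · rw [Set.inter_eq_right.mpr h]; exact hS
  · intro R hR S hS T hT hne
    rcases PA.comparable hS hT with h | h | h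
    · exact absurd h hne
    · rw [Set.inter_eq_left.mpr h]
      exact ⟨(Set.inter_eq_left.mpr (PA.comp_mono_right h)).symm,
        (Set.inter_eq_left.mpr (PA.comp_mono_left h)).symm⟩
    · rw [Set.inter_eq_right.mpr h]
      exact ⟨(Set.inter_eq_right.mpr (PA.comp_mono_right h)).symm,
        (Set.inter_eq_right.mpr (PA.comp_mono_left h)).symm⟩
end

section
/- In the Point Algebra, no subalgebra containing both ≤ and ≠ is distributive: the three relations ≤, ≥, ≠ have pairwise nonempty intersections but empty triple intersection, so the Helly property fails for any subclass containing ≤, ≥, and ≠. -/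
/-- A subclass of relations has the Helly property if triple intersections are
nonempty exactly when all pairwise intersections are. -/
def HellyProperty (S : Set (Set (ℝ × ℝ))) : Prop :=
  ∀ R ∈ S, ∀ T ∈ S, ∀ U ∈ S,
    (R ∩ T ∩ U ≠ ∅ ↔ R ∩ T ≠ ∅ ∧ R ∩ U ≠ ∅ ∧ T ∩ U ≠ ∅)

/-- ≤, ≥, ≠ have pairwise nonempty intersections but empty triple
intersection, so the Helly property (and hence distributivity) fails for any
subclass of the Point Algebra containing ≤, ≥ and ≠. -/
theorem PA_no_distributive_subalgebra_with_le_and_ne :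
    PA.le ∩ PA.ge ≠ ∅ ∧ PA.le ∩ PA.ne ≠ ∅ ∧ PA.ge ∩ PA.ne ≠ ∅ ∧
    PA.le ∩ PA.ge ∩ PA.ne = ∅ ∧
    ∀ S : Set (Set (ℝ × ℝ)), PA.le ∈ S → PA.ge ∈ S → PA.ne ∈ S →
      ¬ HellyProperty S := by
  have h1 : PA.le ∩ PA.ge ≠ ∅ := by
    intro h
    have : ((0:ℝ),(0:ℝ)) ∈ PA.le ∩ PA.ge := ⟨le_refl (0:ℝ), le_refl (0:ℝ)⟩
    rw [h] at this; exact this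
  have h2 : PA.le ∩ PA.ne ≠ ∅ := by
    intro h
    have : ((0:ℝ),(1:ℝ)) ∈ PA.le ∩ PA.ne := ⟨(zero_le_one : (0:ℝ) ≤ 1), (zero_ne_one : (0:ℝ) ≠ 1)⟩
    rw [h] at this; exact this
  have h3 : PA.ge ∩ PA.ne ≠ ∅ := by
    intro h
    have : ((1:ℝ),(0:ℝ)) ∈ PA.ge ∩ PA.ne := ⟨(zero_le_one : (0:ℝ) ≤ 1), (one_ne_zero : (1:ℝ) ≠ 0)⟩
    rw [h] at this; exact this
  have h4 : PA.le ∩ PA.ge ∩ PA.ne = ∅ := by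
    ext ⟨a,b⟩
    simp only [Set.mem_inter_iff, Set.mem_empty_iff_false, iff_false, not_and]
    rintro ⟨hle, hge⟩
    simp only [PA.le, PA.ge, Set.mem_setOf_eq] at hle hge
    simp [PA.ne, le_antisymm hle hge]
  refine ⟨h1, h2, h3, h4, ?_⟩
  intro S hS1 hS2 hS3 hH
  have := (hH PA.le hS1 PA.ge hS2 PA.ne hS3).mpr ⟨h1, h2, h3⟩
  exact this h4
end

section
/- In Allen's Interval Algebra, the convex relations satisfy the Helly property: for any three convex relations R, S, T (order intervals in the conceptual neighbourhood lattice of the 13 basic relations), R∩S∩T ≠ ∅ if and only if R∩S ≠ ∅, R∩T ≠ ∅ and S∩T ≠ ∅. -/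
/-- The 13 basic relations of Allen's Interval Algebra. -/
inductive Allen : Type
  | b | m | o | fi | di | s | eq | si | d | f | oi | mi | bi
  deriving DecidableEq

/-- Closed real intervals with nonempty interior, as pairs of endpoints. -/
abbrev AllenInterval := {p : ℝ × ℝ // p.1 < p.2}

/-- Ligozat's lattice coordinates of the basic relations: the positions of the
two endpoints of `x` relative to the endpoints of `y`. -/
def Allen.coord : Allen → ℕ × ℕ
  | .b  => (0, 0)
  | .m  => (0, 1)
  | .o  => (0, 2)
  | .fi => (0, 3)
  | .di => (0, 4)
  | .s  => (1, 2)
  | .eq => (1, 3)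
  | .si => (1, 4)
  | .d  => (2, 2)
  | .f  => (2, 3)
  | .oi => (2, 4)
  | .mi => (3, 4)
  | .bi => (4, 4)

/-- The conceptual neighbourhood partial (lattice) order on basic relations. -/
def Allen.le (θ₁ θ₂ : Allen) : Prop :=
  (Allen.coord θ₁).1 ≤ (Allen.coord θ₂).1 ∧ (Allen.coord θ₁).2 ≤ (Allen.coord θ₂).2


instance : Fintype Allen :=
  ⟨⟨[Allen.b, Allen.m, Allen.o, Allen.fi, Allen.di, Allen.s, Allen.eq, Allen.si,
     Allen.d, Allen.f, Allen.oi, Allen.mi, Allen.bi], by decide⟩,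
    fun x => by cases x <;> decide⟩

theorem Allen.join3 : ∀ a c e : Allen, ∃ j : Allen,
    j.coord.1 = max a.coord.1 (max c.coord.1 e.coord.1) ∧
    j.coord.2 = max a.coord.2 (max c.coord.2 e.coord.2) := by decide

/-- A set of basic relations is convex if it is an order interval `[θ₁, θ₂]`. -/
def Allen.Convex (R : Set Allen) : Prop :=
  ∃ θ₁ θ₂ : Allen, Allen.le θ₁ θ₂ ∧
    R = {θ | Allen.le θ₁ θ ∧ Allen.le θ θ₂}

/-- the convex relations of Allen's Interval Algebra (order
intervals in the conceptual neighbourhood lattice) satisfy the Helly property. -/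
theorem Allen_convex_helly (R S T : Set Allen)
    (hR : Allen.Convex R) (hS : Allen.Convex S) (hT : Allen.Convex T) :
    (R ∩ S ∩ T).Nonempty ↔
      (R ∩ S).Nonempty ∧ (R ∩ T).Nonempty ∧ (S ∩ T).Nonempty := by
  obtain ⟨a, b, hab, rfl⟩ := hR
  obtain ⟨c, d, hcd, rfl⟩ := hS
  obtain ⟨e, f, hef, rfl⟩ := hT
  constructor
  · rintro ⟨x, ⟨hx1, hx2⟩, hx3⟩
    exact ⟨⟨x, hx1, hx2⟩, ⟨x, hx1, hx3⟩, ⟨x, hx2, hx3⟩⟩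
  · rintro ⟨⟨x, hx1, hx2⟩, ⟨y, hy1, hy2⟩, ⟨z, hz1, hz2⟩⟩
    obtain ⟨j, hj1, hj2⟩ := Allen.join3 a c e
    refine ⟨j, ?_⟩
    simp only [Set.mem_inter_iff, Set.mem_setOf_eq, Allen.le] at *
    omega
end

section
/- In the Point Algebra over ℝ, every path consistent atomic network is consistent: if θᵢⱼ ∈ {<,=,>} for 1 ≤ i,j ≤ n with θᵢᵢ is =, θⱼᵢ the converse of θᵢⱼ, and θᵢⱼ ⊆ θᵢₖ∘θₖⱼ for all i,j,k, then there exist real numbers a₁,…,aₙ with (aᵢ,aⱼ) ∈ θᵢⱼ for all i,j. -/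
lemma PA.conv_eq_s16 : PA.conv PA.eq = PA.eq := by
  ext p; simp [PA.conv, PA.eq, eq_comm]

lemma PA.conv_gt_s16 : PA.conv PA.gt = PA.lt := rfl

lemma PA.lt_ne_eq : PA.lt ≠ PA.eq := by
  intro h
  have : ((0:ℝ),(0:ℝ)) ∈ PA.eq := rfl
  rw [← h] at this
  exact lt_irrefl (0:ℝ) this

/-- every path consistent atomic network over the Point Algebra
is consistent. -/
theorem PA_path_consistent_atomic_network_consistent
    (n : ℕ) (θ : Fin n → Fin n → Set (ℝ × ℝ))
    (hbasic : ∀ i j, θ i j ∈ ({PA.lt, PA.eq, PA.gt} : Set (Set (ℝ × ℝ))))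
    (hrefl : ∀ i, θ i i = PA.eq)
    (hsym : ∀ i j, θ j i = PA.conv (θ i j))
    (hpc : ∀ i j k, θ i j ⊆ PA.comp (θ i k) (θ k j)) :
    ∃ a : Fin n → ℝ, ∀ i j, (a i, a j) ∈ θ i j := by
  classical
  -- transitivity: lt followed by (lt or eq) is lt
  have key : ∀ k i j, θ k i = PA.lt → (θ i j = PA.lt ∨ θ i j = PA.eq) →
      θ k j = PA.lt := by
    intro k i j hki hij
    rcases hbasic k j with h | h | h
    · exact h
    · exfalso
      have hm : ((0:ℝ),(0:ℝ)) ∈ θ k j := by rw [h]; exact rfl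
      obtain ⟨z, hz1, hz2⟩ := hpc k j i hm
      rw [hki] at hz1
      have h1 : (0:ℝ) < z := hz1
      rcases hij with h' | h' <;> rw [h'] at hz2
      · exact absurd (lt_trans h1 hz2) (lt_irrefl 0)
      · have : z = 0 := hz2
        linarith
    · exfalso
      have hm : ((1:ℝ),(0:ℝ)) ∈ θ k j := by rw [h]; show (0:ℝ) < 1; norm_num
      obtain ⟨z, hz1, hz2⟩ := hpc k j i hm
      rw [hki] at hz1
      have h1 : (1:ℝ) < z := hz1
      rcases hij with h' | h' <;> rw [h'] at hz2
      · have : z < 0 := hz2; linarith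
      · have : z = 0 := hz2; linarith
  set below : Fin n → Finset (Fin n) :=
    fun i => Finset.univ.filter (fun k => θ k i = PA.lt) with hbelow
  have hmem : ∀ k i, k ∈ below i ↔ θ k i = PA.lt := by
    intro k i; simp [hbelow]
  have heq : ∀ i j, θ i j = PA.eq → below i = below j := by
    intro i j hij
    have hji : θ j i = PA.eq := by
      rw [hsym i j, hij, PA.conv_eq_s16]
    ext k
    rw [hmem, hmem]
    constructor
    · intro h; exact key k i j h (Or.inr hij)
    · intro h; exact key k j i h (Or.inr hji)
  have hlt : ∀ i j, θ i j = PA.lt → (below i).card < (below j).card := by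
    intro i j hij
    apply Finset.card_lt_card
    constructor
    · intro k hk
      rw [hmem] at hk ⊢
      exact key k i j hk (Or.inl hij)
    · intro hsub
      have hi : i ∈ below j := (hmem i j).2 hij
      have := hsub hi
      rw [hmem] at this
      rw [hrefl i] at this
      exact PA.lt_ne_eq this.symm
  refine ⟨fun i => ((below i).card : ℝ), ?_⟩
  intro i j
  rcases hbasic i j with h | h | h
  · rw [h]
    show ((below i).card : ℝ) < (below j).card
    exact_mod_cast hlt i j h
  · rw [h]
    show ((below i).card : ℝ) = (below j).card
    rw [heq i j h]
  · rw [h]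
    have hji : θ j i = PA.lt := by rw [hsym i j, h, PA.conv_gt_s16]
    show ((below j).card : ℝ) < (below i).card
    exact_mod_cast hlt j i hji
end

section
/- Let A be a relation algebra, S a distributive subalgebra with the Helly property. Suppose a network over S is path consistent on a complete graph over variables {v_{k+1},…,vₙ} ∪ F ∪ {v_j} where F ∪ {v_{n-i}} and F ∪ {v_j} induce complete path consistent subnetworks. Define R_{n-i,j} = ⋂_{k ∈ F} R_{n-i,k}∘R_{k,j}. Then R_{n-i,j} ≠ 0, and for every k' ∈ F: R_{n-i,k'} ≤ R_{n-i,j}∘R_{j,k'}, R_{n-i,j} ≤ R_{n-i,k'}∘R_{k',j}, and R_{k',j} ≤ R_{k',n-i}∘R_{n-i,j}. -/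
/-- the fill-in step of partial path consistency. For a network
over a distributive (Helly) subalgebra that is path consistent on the complete
subgraphs induced by `F ∪ {u}` and `F ∪ {j}` (where `F` is the common
neighbourhood of the missing edge `{u, j}`), the label
`R_{u,j} = ⨅_{k ∈ F} R_{u,k} ∘ R_{k,j}` is nonzero and keeps every triangle
through a vertex `k' ∈ F` path consistent. -/
theorem ppc_fill_in
    {α : Type*} [BooleanAlgebra α]
    (comp : α → α → α) (conv : α → α) (ident : α)
    (assoc : ∀ a b c : α, comp (comp a b) c = comp a (comp b c))
    (comp_ident : ∀ a : α, comp a ident = a)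
    (cycle1 : ∀ R S T : α, comp R S ⊓ T ≠ ⊥ ↔ comp (conv R) T ⊓ S ≠ ⊥)
    (cycle2 : ∀ R S T : α, comp R S ⊓ T ≠ ⊥ ↔ comp T (conv S) ⊓ R ≠ ⊥)
    (S : Set α)
    (hconv : ∀ a ∈ S, conv a ∈ S)
    (hcomp : ∀ a ∈ S, ∀ b ∈ S, comp a b ∈ S)
    (hinter : ∀ a ∈ S, ∀ b ∈ S, a ⊓ b ≠ ⊥ → a ⊓ b ∈ S)
    (hnonzero : ∀ a ∈ S, a ≠ ⊥)
    (hdist : ∀ R ∈ S, ∀ T ∈ S, ∀ U ∈ S, T ⊓ U ≠ ⊥ →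
      comp R (T ⊓ U) = comp R T ⊓ comp R U ∧
      comp (T ⊓ U) R = comp T R ⊓ comp U R)
    (hhelly : ∀ (m : ℕ) (f : Fin m → α), (∀ i, f i ∈ S) →
      (∀ i j, i ≠ j → f i ⊓ f j ≠ ⊥) → Finset.univ.inf f ≠ ⊥)
    -- the network, on an index type ι
    {ι : Type*} [DecidableEq ι]
    (Rel : ι → ι → α)
    (hRS : ∀ a b, Rel a b ∈ S)
    (hRsym : ∀ a b, Rel b a = conv (Rel a b))
    -- the missing edge {u, j} and its common neighbourhood F
    (F : Finset ι) (u j : ι) (hF : F.Nonempty) (huj : u ≠ j)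
    (huF : u ∉ F) (hjF : j ∉ F)
    -- the subnetworks induced by F ∪ {u} and F ∪ {j} are complete and path consistent
    (hpcu : ∀ a ∈ insert u F, ∀ b ∈ insert u F, ∀ c ∈ insert u F,
      Rel a b ≤ comp (Rel a c) (Rel c b))
    (hpcj : ∀ a ∈ insert j F, ∀ b ∈ insert j F, ∀ c ∈ insert j F,
      Rel a b ≤ comp (Rel a c) (Rel c b)) :
    (F.inf (fun k => comp (Rel u k) (Rel k j)) ≠ ⊥) ∧
    (∀ k' ∈ F,
      Rel u k' ≤ comp (F.inf (fun k => comp (Rel u k) (Rel k j))) (Rel j k') ∧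
      F.inf (fun k => comp (Rel u k) (Rel k j)) ≤ comp (Rel u k') (Rel k' j) ∧
      Rel k' j ≤ comp (Rel k' u) (F.inf (fun k => comp (Rel u k) (Rel k j)))) := by
  classical
  set g : ι → α := fun k => comp (Rel u k) (Rel k j) with hg
  have hgS : ∀ k, g k ∈ S := fun k => hcomp _ (hRS u k) _ (hRS k j)
  -- monotonicity of composition on S-elements
  have monoL : ∀ a b c : α, a ∈ S → b ∈ S → c ∈ S → a ≠ ⊥ → a ≤ b →
      comp a c ≤ comp b c := by
    intro a b c ha hb hc hne hab
    have hinf : a ⊓ b = a := inf_eq_left.2 hab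
    have := (hdist c hc a ha b hb (by rw [hinf]; exact hne)).2
    rw [hinf] at this
    rw [this]; exact inf_le_right
  have monoR : ∀ a b c : α, a ∈ S → b ∈ S → c ∈ S → a ≠ ⊥ → a ≤ b →
      comp c a ≤ comp c b := by
    intro a b c ha hb hc hne hab
    have hinf : a ⊓ b = a := inf_eq_left.2 hab
    have := (hdist c hc a ha b hb (by rw [hinf]; exact hne)).1
    rw [hinf] at this
    rw [this]; exact inf_le_right
  -- pairwise nonemptiness of the compositions through F
  have hpair : ∀ k ∈ F, ∀ k' ∈ F, g k ⊓ g k' ≠ ⊥ := by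
    intro k hk k' hk'
    have hcyc := (cycle1 (Rel u k) (Rel k j) (g k'))
    rw [hg]
    rw [show (fun k => comp (Rel u k) (Rel k j)) k = comp (Rel u k) (Rel k j) from rfl,
        show (fun k => comp (Rel u k) (Rel k j)) k' = comp (Rel u k') (Rel k' j) from rfl]
    rw [cycle1, ← hRsym u k]
    have h1 : Rel k k' ≤ comp (Rel k u) (Rel u k') :=
      hpcu k (Finset.mem_insert_of_mem hk) k' (Finset.mem_insert_of_mem hk') u
        (Finset.mem_insert_self _ _)
    have h2 : Rel k j ≤ comp (Rel k k') (Rel k' j) :=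
      hpcj k (Finset.mem_insert_of_mem hk) j (Finset.mem_insert_self _ _) k'
        (Finset.mem_insert_of_mem hk')
    have h3 : comp (Rel k k') (Rel k' j) ≤
        comp (comp (Rel k u) (Rel u k')) (Rel k' j) :=
      monoL _ _ _ (hRS k k') (hcomp _ (hRS k u) _ (hRS u k'))
        (hRS k' j) (hnonzero _ (hRS k k')) h1
    have h4 : Rel k j ≤ comp (Rel k u) (comp (Rel u k') (Rel k' j)) := by
      calc Rel k j ≤ comp (comp (Rel k u) (Rel u k')) (Rel k' j) := h2.trans h3
        _ = _ := assoc _ _ _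
    rw [inf_eq_right.2 h4]
    exact hnonzero _ (hRS k j)
  -- nonemptiness of the full intersection via the Helly property
  have hne : F.inf g ≠ ⊥ := by
    set e := F.equivFin with he
    set f : Fin F.card → α := fun i => g ((e.symm i : F) : ι) with hf
    have hfS : ∀ i, f i ∈ S := fun i => hgS _
    have hfpair : ∀ i i', i ≠ i' → f i ⊓ f i' ≠ ⊥ := by
      intro i i' _
      exact hpair _ (e.symm i).2 _ (e.symm i').2
    have huniv := hhelly _ f hfS hfpair
    have hle : Finset.univ.inf f ≤ F.inf g := by
      apply Finset.le_inf
      intro k hk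
      have : f (e ⟨k, hk⟩) = g k := by
        rw [hf]; simp
      exact (Finset.inf_le (Finset.mem_univ (e ⟨k, hk⟩))).trans this.le
    intro h
    exact huniv (le_bot_iff.1 (hle.trans h.le))
  have hTne : ∀ T : Finset ι, T ⊆ F → T.inf g ≠ ⊥ := by
    intro T hT h
    exact hne (le_bot_iff.1 ((Finset.inf_mono hT).trans h.le))
  -- closure of S under the finite intersections
  have hSinf : ∀ T : Finset ι, T.Nonempty → T ⊆ F → T.inf g ∈ S := by
    intro T hTne'
    induction hTne' using Finset.Nonempty.cons_induction with
    | singleton a => intro _; simpa using hgS a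
    | cons a T ha hT ih =>
      intro hsub
      rw [Finset.inf_cons]
      have hTsub : T ⊆ F := fun x hx => hsub (Finset.mem_cons_of_mem hx)
      refine hinter _ (hgS a) _ (ih hTsub) ?_
      rw [← Finset.inf_cons (h := ha)]
      exact hTne _ hsub
  -- distributivity over finite intersections
  have hdistinf : ∀ c ∈ S, ∀ T : Finset ι, T.Nonempty → T ⊆ F →
      comp (T.inf g) c = T.inf (fun k => comp (g k) c) ∧
      comp c (T.inf g) = T.inf (fun k => comp c (g k)) := by
    intro c hc T hTne'
    induction hTne' using Finset.Nonempty.cons_induction with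
    | singleton a => intro _; simp
    | cons a T ha hT ih =>
      intro hsub
      have hTsub : T ⊆ F := fun x hx => hsub (Finset.mem_cons_of_mem hx)
      have hmt : g a ⊓ T.inf g ≠ ⊥ := by
        rw [← Finset.inf_cons (h := ha)]; exact hTne _ hsub
      have hd := hdist c hc _ (hgS a) _ (hSinf T hT hTsub) hmt
      constructor
      · rw [Finset.inf_cons, hd.2, (ih hTsub).1, Finset.inf_cons]
      · rw [Finset.inf_cons, hd.1, (ih hTsub).2, Finset.inf_cons]
  refine ⟨hne, fun k' hk' => ?_⟩
  have hk'u : k' ∈ insert u F := Finset.mem_insert_of_mem hk'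
  have hk'j : k' ∈ insert j F := Finset.mem_insert_of_mem hk'
  refine ⟨?_, ?_, ?_⟩
  · -- Rel u k' ≤ comp (F.inf g) (Rel j k')
    rw [(hdistinf _ (hRS j k') F hF (le_refl F)).1]
    apply Finset.le_inf
    intro k hk
    have h2 : Rel k k' ≤ comp (Rel k j) (Rel j k') :=
      hpcj k (Finset.mem_insert_of_mem hk) k' (Finset.mem_insert_of_mem hk') j
        (Finset.mem_insert_self _ _)
    have h1 : Rel u k' ≤ comp (Rel u k) (Rel k k') :=
      hpcu u (Finset.mem_insert_self _ _) k' hk'u k (Finset.mem_insert_of_mem hk)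
    have h3 : comp (Rel u k) (Rel k k') ≤ comp (Rel u k) (comp (Rel k j) (Rel j k')) :=
      monoR _ _ _ (hRS k k') (hcomp _ (hRS k j) _ (hRS j k')) (hRS u k)
        (hnonzero _ (hRS k k')) h2
    calc Rel u k' ≤ comp (Rel u k) (comp (Rel k j) (Rel j k')) := h1.trans h3
      _ = comp (g k) (Rel j k') := (assoc _ _ _).symm
  · exact Finset.inf_le hk'
  · -- Rel k' j ≤ comp (Rel k' u) (F.inf g)
    rw [(hdistinf _ (hRS k' u) F hF (le_refl F)).2]
    apply Finset.le_inf
    intro k hk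
    have h1 : Rel k' k ≤ comp (Rel k' u) (Rel u k) :=
      hpcu k' hk'u k (Finset.mem_insert_of_mem hk) u (Finset.mem_insert_self _ _)
    have h2 : Rel k' j ≤ comp (Rel k' k) (Rel k j) :=
      hpcj k' hk'j j (Finset.mem_insert_self _ _) k (Finset.mem_insert_of_mem hk)
    have h3 : comp (Rel k' k) (Rel k j) ≤ comp (comp (Rel k' u) (Rel u k)) (Rel k j) :=
      monoL _ _ _ (hRS k' k) (hcomp _ (hRS k' u) _ (hRS u k)) (hRS k j)
        (hnonzero _ (hRS k' k)) h1
    calc Rel k' j ≤ comp (comp (Rel k' u) (Rel u k)) (Rel k j) := h2.trans h3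
      _ = comp (Rel k' u) (g k) := assoc _ _ _
end

section
/- In the product Point Algebra (Cardinal Relation Algebra), the four subclasses C_PA⊗C_PA, C_PA⊗S_PA, S_PA⊗C_PA, S_PA⊗S_PA — where C_PA = {∅,<,>,=,≤,≥,⋆} and S_PA = {∅,<,>,=,≠,⋆} — are each closed under componentwise composition, converse, and intersection, and composition distributes over nonempty intersections in each. -/
/-- Relational composition of binary relations on the plane ℝ². -/
def CRA.comp (R S : Set ((ℝ × ℝ) × (ℝ × ℝ))) : Set ((ℝ × ℝ) × (ℝ × ℝ)) :=
  {p | ∃ z : ℝ × ℝ, (p.1, z) ∈ R ∧ (z, p.2) ∈ S}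

def CRA.conv (R : Set ((ℝ × ℝ) × (ℝ × ℝ))) : Set ((ℝ × ℝ) × (ℝ × ℝ)) :=
  {p | (p.2, p.1) ∈ R}

/-- The maximal distributive subalgebra C_PA = {∅,<,>,=,≤,≥,⋆} of PA. -/
def CPA : Set (Set (ℝ × ℝ)) := {∅, PA.lt, PA.gt, PA.eq, PA.le, PA.ge, Set.univ}

/-- The maximal distributive subalgebra S_PA = {∅,<,>,=,≠,⋆} of PA. -/
def SPA : Set (Set (ℝ × ℝ)) := {∅, PA.lt, PA.gt, PA.eq, PA.ne, Set.univ}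

/-- The product relation R⊗S on points of the plane: the x-coordinates are
related by R and the y-coordinates by S. -/
def CRA.prodRel (R S : Set (ℝ × ℝ)) : Set ((ℝ × ℝ) × (ℝ × ℝ)) :=
  {p | (p.1.1, p.2.1) ∈ R ∧ (p.1.2, p.2.2) ∈ S}

/-- The product subclass D₁ ⊗ D₂ of the Cardinal Relation Algebra PA⊗PA. -/
def CRA.prodClass (D₁ D₂ : Set (Set (ℝ × ℝ))) : Set (Set ((ℝ × ℝ) × (ℝ × ℝ))) :=
  {X | ∃ R ∈ D₁, ∃ S ∈ D₂, X = CRA.prodRel R S}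

namespace PAProof

open Set

/-- 1D composition. -/
def pcomp (R S : Set (ℝ × ℝ)) : Set (ℝ × ℝ) := {p | ∃ z : ℝ, (p.1, z) ∈ R ∧ (z, p.2) ∈ S}
def pconv (R : Set (ℝ × ℝ)) : Set (ℝ × ℝ) := {p | (p.2, p.1) ∈ R}

lemma pcomp_univ_of {R S : Set (ℝ × ℝ)} (h : ∀ x y : ℝ, ∃ z, (x, z) ∈ R ∧ (z, y) ∈ S) :
    pcomp R S = Set.univ := by
  ext ⟨x, y⟩; simpa [pcomp] using h x y

lemma big {R S : Set (ℝ × ℝ)} (hR : ∀ x z : ℝ, x < z → (x, z) ∈ R)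
    (hS : ∀ z y : ℝ, y < z → (z, y) ∈ S) : pcomp R S = Set.univ :=
  pcomp_univ_of fun x y => ⟨max x y + 1,
    hR _ _ (lt_of_le_of_lt (le_max_left x y) (by linarith)),
    hS _ _ (lt_of_le_of_lt (le_max_right x y) (by linarith))⟩

lemma small {R S : Set (ℝ × ℝ)} (hR : ∀ x z : ℝ, z < x → (x, z) ∈ R)
    (hS : ∀ z y : ℝ, z < y → (z, y) ∈ S) : pcomp R S = Set.univ :=
  pcomp_univ_of fun x y => ⟨min x y - 1,
    hR _ _ (lt_of_lt_of_le (by linarith) (min_le_left x y)),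
    hS _ _ (lt_of_lt_of_le (by linarith) (min_le_right x y))⟩

@[simp] lemma pcomp_bot_left (R : Set (ℝ × ℝ)) : pcomp ∅ R = ∅ := by
  ext ⟨x, y⟩; simp [pcomp]
@[simp] lemma pcomp_bot_right (R : Set (ℝ × ℝ)) : pcomp R ∅ = ∅ := by
  ext ⟨x, y⟩; simp [pcomp]
@[simp] lemma pcomp_eq_left (R : Set (ℝ × ℝ)) : pcomp PA.eq R = R := by
  ext ⟨x, y⟩; simp [pcomp, PA.eq]
@[simp] lemma pcomp_eq_right (R : Set (ℝ × ℝ)) : pcomp R PA.eq = R := by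
  ext ⟨x, y⟩
  simp only [pcomp, PA.lt, PA.gt, PA.eq, PA.le, PA.ge, PA.ne, Set.mem_setOf_eq]
  constructor
  · rintro ⟨z, hz, h⟩; rw [← h]; exact hz
  · intro h; exact ⟨y, h, rfl⟩

-- composition table: univ cases
@[simp] lemma c_lt_gt : pcomp PA.lt PA.gt = Set.univ := big (fun _ _ h => h) (fun _ _ h => h)
@[simp] lemma c_lt_ge : pcomp PA.lt PA.ge = Set.univ := big (fun _ _ h => h) (fun _ _ h => le_of_lt h)
@[simp] lemma c_lt_ne : pcomp PA.lt PA.ne = Set.univ := big (fun _ _ h => h) (fun _ _ h => h.ne')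
@[simp] lemma c_lt_top : pcomp PA.lt Set.univ = Set.univ := big (fun _ _ h => h) (fun _ _ _ => trivial)
@[simp] lemma c_le_gt : pcomp PA.le PA.gt = Set.univ := big (fun _ _ h => le_of_lt h) (fun _ _ h => h)
@[simp] lemma c_le_ge : pcomp PA.le PA.ge = Set.univ := big (fun _ _ h => le_of_lt h) (fun _ _ h => le_of_lt h)
@[simp] lemma c_le_top : pcomp PA.le Set.univ = Set.univ := big (fun _ _ h => le_of_lt h) (fun _ _ _ => trivial)
@[simp] lemma c_gt_lt : pcomp PA.gt PA.lt = Set.univ := small (fun _ _ h => h) (fun _ _ h => h)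
@[simp] lemma c_gt_le : pcomp PA.gt PA.le = Set.univ := small (fun _ _ h => h) (fun _ _ h => le_of_lt h)
@[simp] lemma c_gt_ne : pcomp PA.gt PA.ne = Set.univ := small (fun _ _ h => h) (fun _ _ h => h.ne)
@[simp] lemma c_gt_top : pcomp PA.gt Set.univ = Set.univ := small (fun _ _ h => h) (fun _ _ _ => trivial)
@[simp] lemma c_ge_lt : pcomp PA.ge PA.lt = Set.univ := small (fun _ _ h => le_of_lt h) (fun _ _ h => h)
@[simp] lemma c_ge_le : pcomp PA.ge PA.le = Set.univ := small (fun _ _ h => le_of_lt h) (fun _ _ h => le_of_lt h)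
@[simp] lemma c_ge_top : pcomp PA.ge Set.univ = Set.univ := small (fun _ _ h => le_of_lt h) (fun _ _ _ => trivial)
@[simp] lemma c_ne_lt : pcomp PA.ne PA.lt = Set.univ := small (fun _ _ h => h.ne') (fun _ _ h => h)
@[simp] lemma c_ne_gt : pcomp PA.ne PA.gt = Set.univ := big (fun _ _ h => h.ne) (fun _ _ h => h)
@[simp] lemma c_ne_ne : pcomp PA.ne PA.ne = Set.univ := big (fun _ _ h => h.ne) (fun _ _ h => h.ne')
@[simp] lemma c_ne_top : pcomp PA.ne Set.univ = Set.univ := big (fun _ _ h => h.ne) (fun _ _ _ => trivial)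
@[simp] lemma c_top_lt : pcomp Set.univ PA.lt = Set.univ := small (fun _ _ _ => trivial) (fun _ _ h => h)
@[simp] lemma c_top_le : pcomp Set.univ PA.le = Set.univ := small (fun _ _ _ => trivial) (fun _ _ h => le_of_lt h)
@[simp] lemma c_top_gt : pcomp Set.univ PA.gt = Set.univ := big (fun _ _ _ => trivial) (fun _ _ h => h)
@[simp] lemma c_top_ge : pcomp Set.univ PA.ge = Set.univ := big (fun _ _ _ => trivial) (fun _ _ h => le_of_lt h)
@[simp] lemma c_top_ne : pcomp Set.univ PA.ne = Set.univ := big (fun _ _ _ => trivial) (fun _ _ h => h.ne')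
@[simp] lemma c_top_top : pcomp Set.univ Set.univ = Set.univ :=
  pcomp_univ_of fun x _ => ⟨x, trivial, trivial⟩

-- composition table: order cases
@[simp] lemma c_lt_lt : pcomp PA.lt PA.lt = PA.lt := by
  ext ⟨x, y⟩
  simp only [pcomp, PA.lt, PA.gt, PA.eq, PA.le, PA.ge, PA.ne, Set.mem_setOf_eq]
  constructor
  · rintro ⟨z, h1, h2⟩; exact lt_trans h1 h2
  · intro h; obtain ⟨z, h1, h2⟩ := exists_between h; exact ⟨z, h1, h2⟩
@[simp] lemma c_lt_le : pcomp PA.lt PA.le = PA.lt := by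
  ext ⟨x, y⟩
  simp only [pcomp, PA.lt, PA.gt, PA.eq, PA.le, PA.ge, PA.ne, Set.mem_setOf_eq]
  constructor
  · rintro ⟨z, h1, h2⟩; exact lt_of_lt_of_le h1 h2
  · intro h; exact ⟨y, h, le_refl y⟩
@[simp] lemma c_le_lt : pcomp PA.le PA.lt = PA.lt := by
  ext ⟨x, y⟩
  simp only [pcomp, PA.lt, PA.gt, PA.eq, PA.le, PA.ge, PA.ne, Set.mem_setOf_eq]
  constructor
  · rintro ⟨z, h1, h2⟩; exact lt_of_le_of_lt h1 h2
  · intro h; exact ⟨x, le_refl x, h⟩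
@[simp] lemma c_le_le : pcomp PA.le PA.le = PA.le := by
  ext ⟨x, y⟩
  simp only [pcomp, PA.lt, PA.gt, PA.eq, PA.le, PA.ge, PA.ne, Set.mem_setOf_eq]
  constructor
  · rintro ⟨z, h1, h2⟩; exact le_trans h1 h2
  · intro h; exact ⟨x, le_refl x, h⟩
@[simp] lemma c_gt_gt : pcomp PA.gt PA.gt = PA.gt := by
  ext ⟨x, y⟩
  simp only [pcomp, PA.lt, PA.gt, PA.eq, PA.le, PA.ge, PA.ne, Set.mem_setOf_eq]
  constructor
  · rintro ⟨z, h1, h2⟩; exact lt_trans h2 h1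
  · intro h; obtain ⟨z, h1, h2⟩ := exists_between h; exact ⟨z, h2, h1⟩
@[simp] lemma c_gt_ge : pcomp PA.gt PA.ge = PA.gt := by
  ext ⟨x, y⟩
  simp only [pcomp, PA.lt, PA.gt, PA.eq, PA.le, PA.ge, PA.ne, Set.mem_setOf_eq]
  constructor
  · rintro ⟨z, h1, h2⟩; exact lt_of_le_of_lt h2 h1
  · intro h; exact ⟨y, h, le_refl y⟩
@[simp] lemma c_ge_gt : pcomp PA.ge PA.gt = PA.gt := by
  ext ⟨x, y⟩
  simp only [pcomp, PA.lt, PA.gt, PA.eq, PA.le, PA.ge, PA.ne, Set.mem_setOf_eq]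
  constructor
  · rintro ⟨z, h1, h2⟩; exact lt_of_lt_of_le h2 h1
  · intro h; exact ⟨x, le_refl x, h⟩
@[simp] lemma c_ge_ge : pcomp PA.ge PA.ge = PA.ge := by
  ext ⟨x, y⟩
  simp only [pcomp, PA.lt, PA.gt, PA.eq, PA.le, PA.ge, PA.ne, Set.mem_setOf_eq]
  constructor
  · rintro ⟨z, h1, h2⟩; exact le_trans h2 h1
  · intro h; exact ⟨x, le_refl x, h⟩

-- converse table
@[simp] lemma v_bot : pconv ∅ = ∅ := rfl
@[simp] lemma v_top : pconv Set.univ = Set.univ := rfl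
@[simp] lemma v_lt : pconv PA.lt = PA.gt := rfl
@[simp] lemma v_gt : pconv PA.gt = PA.lt := rfl
@[simp] lemma v_le : pconv PA.le = PA.ge := rfl
@[simp] lemma v_ge : pconv PA.ge = PA.le := rfl
@[simp] lemma v_eq : pconv PA.eq = PA.eq := by
  ext ⟨x, y⟩; simp [pconv, PA.eq, eq_comm]
@[simp] lemma v_ne : pconv PA.ne = PA.ne := by
  ext ⟨x, y⟩; simp [pconv, PA.ne, ne_comm]

-- intersection table
@[simp] lemma i_lt_gt : PA.lt ∩ PA.gt = ∅ := by
  ext ⟨x, y⟩; simp [PA.lt, PA.gt]; intro h; linarith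
@[simp] lemma i_gt_lt : PA.gt ∩ PA.lt = ∅ := by
  ext ⟨x, y⟩; simp [PA.lt, PA.gt]; intro h; linarith
@[simp] lemma i_lt_eq : PA.lt ∩ PA.eq = ∅ := by
  ext ⟨x, y⟩; simp [PA.lt, PA.eq]; intro h h'; exact absurd h' (ne_of_lt h)
@[simp] lemma i_eq_lt : PA.eq ∩ PA.lt = ∅ := by
  ext ⟨x, y⟩; simp [PA.lt, PA.eq]; intro h; simp [h]
@[simp] lemma i_gt_eq : PA.gt ∩ PA.eq = ∅ := by
  ext ⟨x, y⟩; simp [PA.gt, PA.eq]; intro h h'; exact absurd h' (ne_of_gt h)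
@[simp] lemma i_eq_gt : PA.eq ∩ PA.gt = ∅ := by
  ext ⟨x, y⟩; simp [PA.gt, PA.eq]; intro h; simp [h]
@[simp] lemma i_lt_le : PA.lt ∩ PA.le = PA.lt := by
  ext ⟨x, y⟩; simp [PA.lt, PA.le]; intro h; exact le_of_lt h
@[simp] lemma i_le_lt : PA.le ∩ PA.lt = PA.lt := by
  ext ⟨x, y⟩; simp [PA.lt, PA.le]; intro h; exact le_of_lt h
@[simp] lemma i_lt_ge : PA.lt ∩ PA.ge = ∅ := by
  ext ⟨x, y⟩; simp [PA.lt, PA.ge]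
@[simp] lemma i_ge_lt : PA.ge ∩ PA.lt = ∅ := by
  ext ⟨x, y⟩; simp [PA.lt, PA.ge]
@[simp] lemma i_gt_le : PA.gt ∩ PA.le = ∅ := by
  ext ⟨x, y⟩; simp [PA.gt, PA.le]
@[simp] lemma i_le_gt : PA.le ∩ PA.gt = ∅ := by
  ext ⟨x, y⟩; simp [PA.gt, PA.le]
@[simp] lemma i_gt_ge : PA.gt ∩ PA.ge = PA.gt := by
  ext ⟨x, y⟩; simp [PA.gt, PA.ge]; intro h; exact le_of_lt h
@[simp] lemma i_ge_gt : PA.ge ∩ PA.gt = PA.gt := by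
  ext ⟨x, y⟩; simp [PA.gt, PA.ge]; intro h; exact le_of_lt h
@[simp] lemma i_eq_le : PA.eq ∩ PA.le = PA.eq := by
  ext ⟨x, y⟩; simp [PA.eq, PA.le]; intro h; exact le_of_eq h
@[simp] lemma i_le_eq : PA.le ∩ PA.eq = PA.eq := by
  ext ⟨x, y⟩; simp [PA.eq, PA.le]; intro h; exact le_of_eq h
@[simp] lemma i_eq_ge : PA.eq ∩ PA.ge = PA.eq := by
  ext ⟨x, y⟩; simp [PA.eq, PA.ge]; intro h; exact ge_of_eq h
@[simp] lemma i_ge_eq : PA.ge ∩ PA.eq = PA.eq := by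
  ext ⟨x, y⟩; simp [PA.eq, PA.ge]; intro h; exact ge_of_eq h
@[simp] lemma i_le_ge : PA.le ∩ PA.ge = PA.eq := by
  ext ⟨x, y⟩; simp [PA.le, PA.ge, PA.eq]; exact le_antisymm_iff.symm
@[simp] lemma i_ge_le : PA.ge ∩ PA.le = PA.eq := by
  ext ⟨x, y⟩
  simp only [PA.le, PA.ge, PA.eq, Set.mem_inter_iff, Set.mem_setOf_eq]
  constructor
  · rintro ⟨h1, h2⟩; exact le_antisymm h2 h1
  · intro h; exact ⟨le_of_eq h.symm, le_of_eq h⟩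
@[simp] lemma i_lt_ne : PA.lt ∩ PA.ne = PA.lt := by
  ext ⟨x, y⟩; simp [PA.lt, PA.ne]; intro h; exact ne_of_lt h
@[simp] lemma i_ne_lt : PA.ne ∩ PA.lt = PA.lt := by
  ext ⟨x, y⟩; simp [PA.lt, PA.ne]; intro h; exact ne_of_lt h
@[simp] lemma i_gt_ne : PA.gt ∩ PA.ne = PA.gt := by
  ext ⟨x, y⟩; simp [PA.gt, PA.ne]; intro h; exact ne_of_gt h
@[simp] lemma i_ne_gt : PA.ne ∩ PA.gt = PA.gt := by
  ext ⟨x, y⟩; simp [PA.gt, PA.ne]; intro h; exact ne_of_gt h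
@[simp] lemma i_eq_ne : PA.eq ∩ PA.ne = ∅ := by
  ext ⟨x, y⟩; simp [PA.eq, PA.ne]
@[simp] lemma i_ne_eq : PA.ne ∩ PA.eq = ∅ := by
  ext ⟨x, y⟩; simp [PA.eq, PA.ne]

@[simp] lemma lt_ne_empty : PA.lt ≠ ∅ := by
  intro h; have : ((0:ℝ), (1:ℝ)) ∈ PA.lt := by norm_num [PA.lt]
  rw [h] at this; exact this
@[simp] lemma gt_ne_empty : PA.gt ≠ ∅ := by
  intro h; have : ((1:ℝ), (0:ℝ)) ∈ PA.gt := by norm_num [PA.gt]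
  rw [h] at this; exact this
@[simp] lemma eq_ne_empty : PA.eq ≠ ∅ := by
  intro h; have : ((0:ℝ), (0:ℝ)) ∈ PA.eq := rfl
  rw [h] at this; exact this
@[simp] lemma le_ne_empty : PA.le ≠ ∅ := by
  intro h; have : ((0:ℝ), (0:ℝ)) ∈ PA.le := le_refl (0:ℝ)
  rw [h] at this; exact this
@[simp] lemma ge_ne_empty : PA.ge ≠ ∅ := by
  intro h; have : ((0:ℝ), (0:ℝ)) ∈ PA.ge := le_refl (0:ℝ)
  rw [h] at this; exact this
@[simp] lemma ne_ne_empty : PA.ne ≠ ∅ := by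
  intro h; have : ((0:ℝ), (1:ℝ)) ∈ PA.ne := by norm_num [PA.ne]
  rw [h] at this; exact this

-- 1D closure lemmas
lemma CPA_comp : ∀ R ∈ CPA, ∀ S ∈ CPA, pcomp R S ∈ CPA := by
  intro R hR S hS
  simp only [CPA, Set.mem_insert_iff, Set.mem_singleton_iff] at hR hS ⊢
  rcases hR with rfl | rfl | rfl | rfl | rfl | rfl | rfl <;>
    rcases hS with rfl | rfl | rfl | rfl | rfl | rfl | rfl <;> simp

lemma SPA_comp : ∀ R ∈ SPA, ∀ S ∈ SPA, pcomp R S ∈ SPA := by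
  intro R hR S hS
  simp only [SPA, Set.mem_insert_iff, Set.mem_singleton_iff] at hR hS ⊢
  rcases hR with rfl | rfl | rfl | rfl | rfl | rfl <;>
    rcases hS with rfl | rfl | rfl | rfl | rfl | rfl <;> simp

lemma CPA_conv : ∀ R ∈ CPA, pconv R ∈ CPA := by
  intro R hR
  simp only [CPA, Set.mem_insert_iff, Set.mem_singleton_iff] at hR ⊢
  rcases hR with rfl | rfl | rfl | rfl | rfl | rfl | rfl <;> simp

lemma SPA_conv : ∀ R ∈ SPA, pconv R ∈ SPA := by
  intro R hR
  simp only [SPA, Set.mem_insert_iff, Set.mem_singleton_iff] at hR ⊢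
  rcases hR with rfl | rfl | rfl | rfl | rfl | rfl <;> simp

lemma CPA_inter : ∀ R ∈ CPA, ∀ S ∈ CPA, R ∩ S ∈ CPA := by
  intro R hR S hS
  simp only [CPA, Set.mem_insert_iff, Set.mem_singleton_iff] at hR hS ⊢
  rcases hR with rfl | rfl | rfl | rfl | rfl | rfl | rfl <;>
    rcases hS with rfl | rfl | rfl | rfl | rfl | rfl | rfl <;> simp

lemma SPA_inter : ∀ R ∈ SPA, ∀ S ∈ SPA, R ∩ S ∈ SPA := by
  intro R hR S hS
  simp only [SPA, Set.mem_insert_iff, Set.mem_singleton_iff] at hR hS ⊢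
  rcases hR with rfl | rfl | rfl | rfl | rfl | rfl <;>
    rcases hS with rfl | rfl | rfl | rfl | rfl | rfl <;> simp

lemma CPA_dist : ∀ R ∈ CPA, ∀ S ∈ CPA, ∀ T ∈ CPA, S ∩ T ≠ ∅ →
    pcomp R (S ∩ T) = pcomp R S ∩ pcomp R T ∧
    pcomp (S ∩ T) R = pcomp S R ∩ pcomp T R := by
  intro R hR S hS T hT hne
  simp only [CPA, Set.mem_insert_iff, Set.mem_singleton_iff] at hR hS hT
  rcases hS with rfl | rfl | rfl | rfl | rfl | rfl | rfl <;>
    rcases hT with rfl | rfl | rfl | rfl | rfl | rfl | rfl <;>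
    rcases hR with rfl | rfl | rfl | rfl | rfl | rfl | rfl <;>
    simp_all

lemma SPA_dist : ∀ R ∈ SPA, ∀ S ∈ SPA, ∀ T ∈ SPA, S ∩ T ≠ ∅ →
    pcomp R (S ∩ T) = pcomp R S ∩ pcomp R T ∧
    pcomp (S ∩ T) R = pcomp S R ∩ pcomp T R := by
  intro R hR S hS T hT hne
  simp only [SPA, Set.mem_insert_iff, Set.mem_singleton_iff] at hR hS hT
  rcases hS with rfl | rfl | rfl | rfl | rfl | rfl <;>
    rcases hT with rfl | rfl | rfl | rfl | rfl | rfl <;>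
    rcases hR with rfl | rfl | rfl | rfl | rfl | rfl <;>
    simp_all

-- 2D componentwise lemmas
lemma prod_comp (A B C D : Set (ℝ × ℝ)) :
    CRA.comp (CRA.prodRel A B) (CRA.prodRel C D) = CRA.prodRel (pcomp A C) (pcomp B D) := by
  ext ⟨⟨x1, x2⟩, ⟨y1, y2⟩⟩
  simp only [CRA.comp, CRA.prodRel, pcomp, Set.mem_setOf_eq]
  constructor
  · rintro ⟨⟨z1, z2⟩, ⟨h1, h2⟩, ⟨h3, h4⟩⟩; exact ⟨⟨z1, h1, h3⟩, ⟨z2, h2, h4⟩⟩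
  · rintro ⟨⟨z1, h1, h3⟩, ⟨z2, h2, h4⟩⟩; exact ⟨(z1, z2), ⟨h1, h2⟩, ⟨h3, h4⟩⟩

lemma prod_conv (A B : Set (ℝ × ℝ)) :
    CRA.conv (CRA.prodRel A B) = CRA.prodRel (pconv A) (pconv B) := rfl

lemma prod_inter (A B C D : Set (ℝ × ℝ)) :
    CRA.prodRel A B ∩ CRA.prodRel C D = CRA.prodRel (A ∩ C) (B ∩ D) := by
  ext ⟨⟨x1, x2⟩, ⟨y1, y2⟩⟩
  simp only [CRA.prodRel, Set.mem_inter_iff, Set.mem_setOf_eq]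
  tauto

lemma prod_ne_empty {A B : Set (ℝ × ℝ)} (h : CRA.prodRel A B ≠ ∅) : A ≠ ∅ ∧ B ≠ ∅ := by
  obtain ⟨⟨p, q⟩, hp, hq⟩ := Set.nonempty_iff_ne_empty.mpr h
  exact ⟨Set.nonempty_iff_ne_empty.mp ⟨(p.1, q.1), hp⟩,
         Set.nonempty_iff_ne_empty.mp ⟨(p.2, q.2), hq⟩⟩

lemma main_generic (D₁ D₂ : Set (Set (ℝ × ℝ)))
    (hc₁ : ∀ R ∈ D₁, ∀ S ∈ D₁, pcomp R S ∈ D₁)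
    (hc₂ : ∀ R ∈ D₂, ∀ S ∈ D₂, pcomp R S ∈ D₂)
    (hv₁ : ∀ R ∈ D₁, pconv R ∈ D₁)
    (hv₂ : ∀ R ∈ D₂, pconv R ∈ D₂)
    (hi₁ : ∀ R ∈ D₁, ∀ S ∈ D₁, R ∩ S ∈ D₁)
    (hi₂ : ∀ R ∈ D₂, ∀ S ∈ D₂, R ∩ S ∈ D₂)
    (hd₁ : ∀ R ∈ D₁, ∀ S ∈ D₁, ∀ T ∈ D₁, S ∩ T ≠ ∅ →
      pcomp R (S ∩ T) = pcomp R S ∩ pcomp R T ∧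
      pcomp (S ∩ T) R = pcomp S R ∩ pcomp T R)
    (hd₂ : ∀ R ∈ D₂, ∀ S ∈ D₂, ∀ T ∈ D₂, S ∩ T ≠ ∅ →
      pcomp R (S ∩ T) = pcomp R S ∩ pcomp R T ∧
      pcomp (S ∩ T) R = pcomp S R ∩ pcomp T R) :
    (∀ R ∈ CRA.prodClass D₁ D₂, ∀ S ∈ CRA.prodClass D₁ D₂,
        CRA.comp R S ∈ CRA.prodClass D₁ D₂) ∧
      (∀ R ∈ CRA.prodClass D₁ D₂, CRA.conv R ∈ CRA.prodClass D₁ D₂) ∧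
      (∀ R ∈ CRA.prodClass D₁ D₂, ∀ S ∈ CRA.prodClass D₁ D₂,
        R ∩ S ∈ CRA.prodClass D₁ D₂) ∧
      (∀ R ∈ CRA.prodClass D₁ D₂, ∀ S ∈ CRA.prodClass D₁ D₂,
        ∀ T ∈ CRA.prodClass D₁ D₂, S ∩ T ≠ ∅ →
          CRA.comp R (S ∩ T) = CRA.comp R S ∩ CRA.comp R T ∧
          CRA.comp (S ∩ T) R = CRA.comp S R ∩ CRA.comp T R) := by
  refine ⟨?_, ?_, ?_, ?_⟩
  · rintro X ⟨R1, hR1, R2, hR2, rfl⟩ Y ⟨S1, hS1, S2, hS2, rfl⟩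
    exact ⟨_, hc₁ _ hR1 _ hS1, _, hc₂ _ hR2 _ hS2, prod_comp R1 R2 S1 S2⟩
  · rintro X ⟨R1, hR1, R2, hR2, rfl⟩
    exact ⟨_, hv₁ _ hR1, _, hv₂ _ hR2, prod_conv R1 R2⟩
  · rintro X ⟨R1, hR1, R2, hR2, rfl⟩ Y ⟨S1, hS1, S2, hS2, rfl⟩
    exact ⟨_, hi₁ _ hR1 _ hS1, _, hi₂ _ hR2 _ hS2, prod_inter R1 R2 S1 S2⟩
  · rintro X ⟨R1, hR1, R2, hR2, rfl⟩ Y ⟨S1, hS1, S2, hS2, rfl⟩ Z ⟨T1, hT1, T2, hT2, rfl⟩ hne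
    rw [prod_inter] at hne
    obtain ⟨h1, h2⟩ := prod_ne_empty hne
    obtain ⟨e1, e1'⟩ := hd₁ R1 hR1 S1 hS1 T1 hT1 h1
    obtain ⟨e2, e2'⟩ := hd₂ R2 hR2 S2 hS2 T2 hT2 h2
    constructor
    · rw [prod_inter, prod_comp, prod_comp, prod_comp, e1, e2, ← prod_inter]
    · rw [prod_inter, prod_comp, prod_comp, prod_comp, e1', e2', ← prod_inter]

end PAProof
/-- each of the four product subclasses C_PA⊗C_PA, C_PA⊗S_PA,
S_PA⊗C_PA, S_PA⊗S_PA of the Cardinal Relation Algebra is closed under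
composition, converse and intersection, and composition distributes over
nonempty intersections of its elements. -/
theorem CRA_four_maximal_distributive_subalgebras :
    ∀ D₁ ∈ ({CPA, SPA} : Set (Set (Set (ℝ × ℝ)))),
    ∀ D₂ ∈ ({CPA, SPA} : Set (Set (Set (ℝ × ℝ)))),
      (∀ R ∈ CRA.prodClass D₁ D₂, ∀ S ∈ CRA.prodClass D₁ D₂,
        CRA.comp R S ∈ CRA.prodClass D₁ D₂) ∧
      (∀ R ∈ CRA.prodClass D₁ D₂, CRA.conv R ∈ CRA.prodClass D₁ D₂) ∧
      (∀ R ∈ CRA.prodClass D₁ D₂, ∀ S ∈ CRA.prodClass D₁ D₂,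
        R ∩ S ∈ CRA.prodClass D₁ D₂) ∧
      (∀ R ∈ CRA.prodClass D₁ D₂, ∀ S ∈ CRA.prodClass D₁ D₂,
        ∀ T ∈ CRA.prodClass D₁ D₂, S ∩ T ≠ ∅ →
          CRA.comp R (S ∩ T) = CRA.comp R S ∩ CRA.comp R T ∧
          CRA.comp (S ∩ T) R = CRA.comp S R ∩ CRA.comp T R) := by

  rintro D₁ hD₁ D₂ hD₂
  rcases hD₁ with rfl | rfl <;> rcases hD₂ with rfl | rfl <;>
    first
    | exact PAProof.main_generic CPA CPA PAProof.CPA_comp PAProof.CPA_comp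
        PAProof.CPA_conv PAProof.CPA_conv PAProof.CPA_inter PAProof.CPA_inter
        PAProof.CPA_dist PAProof.CPA_dist
    | exact PAProof.main_generic CPA SPA PAProof.CPA_comp PAProof.SPA_comp
        PAProof.CPA_conv PAProof.SPA_conv PAProof.CPA_inter PAProof.SPA_inter
        PAProof.CPA_dist PAProof.SPA_dist
    | exact PAProof.main_generic SPA CPA PAProof.SPA_comp PAProof.CPA_comp
        PAProof.SPA_conv PAProof.CPA_conv PAProof.SPA_inter PAProof.CPA_inter
        PAProof.SPA_dist PAProof.CPA_dist
    | exact PAProof.main_generic SPA SPA PAProof.SPA_comp PAProof.SPA_comp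
        PAProof.SPA_conv PAProof.SPA_conv PAProof.SPA_inter PAProof.SPA_inter
        PAProof.SPA_dist PAProof.SPA_dist
end
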